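/- Suppose 0 < r < c/(‖T‖³‖A₁‖) and ‖l̄‖ ≤ r·(c − ‖A₁‖·‖T‖³·r). Then for every v ∈ (ker T)⊥ with ‖v‖ ≤ r and every h ∈ (ker T)⊥ with G h = l̄ − G₁(v), one has ‖h‖ ≤ r. In other words, the map 𝐇(v) := (G|_{Ran G})⁻¹(l̄ − G₁(v)) maps the ball 𝐁_r = {u ∈ Ran G : ‖u‖ ≤ r} into itself. -/

import Mathlib

open scoped RealInnerProductSpace

/-- The discrete fixed point map `𝐇(v) = (G|_{Ran G})⁻¹(l̄ − G₁(v))` maps the ball of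
radius `r` in `Ran G = (ker T)ᗮ` into itself, provided `0 < r < c/(‖T‖³‖A₁‖)` and
`‖l̄‖ ≤ r(c − ‖A₁‖‖T‖³ r)`. -/
theorem discrete_fixed_point_map_maps_ball_into_itself
    {V H : Type*} [NormedAddCommGroup V] [InnerProductSpace ℝ V] [CompleteSpace V]
    [NormedAddCommGroup H] [InnerProductSpace ℝ H] [CompleteSpace H]
    (B : V →L[ℝ] V) (α : ℝ) (hα : 0 < α)
    (hB : ∀ v : V, α * ‖v‖ ^ 2 ≤ ⟪B v, v⟫)
    (T : H →L[ℝ] V) (hT : Function.Surjective T)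
    (G : H →L[ℝ] H) (hG : G = (ContinuousLinearMap.adjoint T).comp (B.comp T))
    (c : ℝ) (hc : 0 < c) (hcG : ∀ x ∈ (LinearMap.ker (T : H →ₗ[ℝ] V))ᗮ, c * ‖x‖ ≤ ‖G x‖)
    (A₁ : V →L[ℝ] V →L[ℝ] V) (hA₁ : ‖A₁‖ ≠ 0)
    (G₁ : H → H) (hG₁ : ∀ x : H, G₁ x = ContinuousLinearMap.adjoint T (A₁ (T x) (T x)))
    (lbar : H) (hlbar : lbar ∈ LinearMap.range ((ContinuousLinearMap.adjoint T : V →L[ℝ] H) : V →ₗ[ℝ] H))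
    (r : ℝ) (hr : 0 < r) (hr' : r < c / (‖T‖ ^ 3 * ‖A₁‖))
    (hl : ‖lbar‖ ≤ r * (c - ‖A₁‖ * ‖T‖ ^ 3 * r)) :
    ∀ v : H, v ∈ (LinearMap.ker (T : H →ₗ[ℝ] V))ᗮ → ‖v‖ ≤ r →
      ∀ h : H, h ∈ (LinearMap.ker (T : H →ₗ[ℝ] V))ᗮ → G h = lbar - G₁ v → ‖h‖ ≤ r := by
  intro v hv hvr h hh hGh
  have hTadj : ‖ContinuousLinearMap.adjoint T‖ = ‖T‖ := ContinuousLinearMap.adjoint.norm_map T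
  have hTnn : (0:ℝ) ≤ ‖T‖ := norm_nonneg _
  have hG1v : ‖G₁ v‖ ≤ ‖A₁‖ * ‖T‖ ^ 3 * r ^ 2 := by
    rw [hG₁]
    calc ‖ContinuousLinearMap.adjoint T (A₁ (T v) (T v))‖
        ≤ ‖ContinuousLinearMap.adjoint T‖ * ‖A₁ (T v) (T v)‖ :=
          (ContinuousLinearMap.adjoint T).le_opNorm _
      _ ≤ ‖T‖ * (‖A₁‖ * ‖T v‖ * ‖T v‖) := by
          rw [hTadj]
          exact mul_le_mul_of_nonneg_left ((A₁ (T v)).le_opNorm _ |>.trans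
            (mul_le_mul_of_nonneg_right (A₁.le_opNorm _) (norm_nonneg _))) hTnn
      _ ≤ ‖T‖ * (‖A₁‖ * (‖T‖ * r) * (‖T‖ * r)) := by
          have hTv : ‖T v‖ ≤ ‖T‖ * r := (T.le_opNorm v).trans
            (mul_le_mul_of_nonneg_left hvr hTnn)
          have h1 : (0:ℝ) ≤ ‖T‖ * r := mul_nonneg hTnn hr.le
          gcongr
      _ = ‖A₁‖ * ‖T‖ ^ 3 * r ^ 2 := by ring
  have key : c * ‖h‖ ≤ c * r := by
    calc c * ‖h‖ ≤ ‖G h‖ := hcG h hh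
      _ = ‖lbar - G₁ v‖ := by rw [hGh]
      _ ≤ ‖lbar‖ + ‖G₁ v‖ := norm_sub_le _ _
      _ ≤ r * (c - ‖A₁‖ * ‖T‖ ^ 3 * r) + ‖A₁‖ * ‖T‖ ^ 3 * r ^ 2 := add_le_add hl hG1v
      _ = c * r := by ring
  exact le_of_mul_le_mul_left key hc
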